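/- For coprime positive integers m and n, every (m,n)-Dyck path of positive area contains a consecutive North-then-East pair of steps whose swap to East-then-North yields another (m,n)-Dyck path; consequently, every (m,n)-Dyck path can be obtained from the area-0 path by a sequence of East-North to North-East swaps. -/

import Mathlib

open scoped Classical

/-- `p` is an `(m,n)`-Dyck path: a 0-1 sequence (`true` = North, `false` = East) of
length `m+n` with `n` North steps, all of whose prefix ranks are nonnegative. -/
def IsDyckPath (m n : ℕ) (p : List Bool) : Prop :=
  p.length = m + n ∧ p.count true = n ∧
    ∀ k, n * ((p.take k).count false) ≤ m * ((p.take k).count true)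

/-- Area of an `(m,n)`-path `q`: the number of cells below the path and strictly
above the diagonal. -/
noncomputable def areaL (m n : ℕ) (q : List Bool) : ℕ :=
  ((Finset.range m ×ˢ Finset.range n).filter (fun c =>
    (∃ i < m + n, q.getD i true = false ∧ (q.take i).count false = c.1 ∧
        c.2 + 1 ≤ (q.take i).count true) ∧
    n * (c.1 + 1) ≤ m * c.2)).card

/-- The elementary move: `q'` is obtained from `q` by swapping a consecutive
East-then-North pair of steps to North-then-East, both paths being Dyck. -/
def SwapRel (m n : ℕ) (q q' : List Bool) : Prop :=
  ∃ a b, q = a ++ [false, true] ++ b ∧ q' = a ++ [true, false] ++ b ∧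
    IsDyckPath m n q ∧ IsDyckPath m n q'

-- take of append decomposition
lemma take_mid_le (a s b : List Bool) {k : ℕ} (hk : k ≤ a.length) :
    (a ++ s ++ b).take k = a.take k := by
  rw [List.append_assoc, List.take_append,
    Nat.sub_eq_zero_of_le hk, List.take_zero, List.append_nil]

lemma take_mid_eq (a : List Bool) (u : Bool) (v : Bool) (b : List Bool) :
    ((a ++ [u,v] ++ b).take (a.length + 1)) = a ++ [u] := by
  rw [List.append_assoc, List.take_append]
  simp

lemma take_mid_ge (a : List Bool) (u v : Bool) (b : List Bool) {k : ℕ} (hk : a.length + 2 ≤ k) :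
    (a ++ [u,v] ++ b).take k = a ++ [u,v] ++ b.take (k - (a.length + 2)) := by
  rw [List.take_append, List.take_of_length_le (by simp; omega)]
  congr 2
  simp

lemma count_take_swap (a b : List Bool) (u v c : Bool) {k : ℕ} (hk : k ≠ a.length + 1) :
    ((a ++ [u,v] ++ b).take k).count c = ((a ++ [v,u] ++ b).take k).count c := by
  rcases le_or_gt k a.length with h | h
  · rw [take_mid_le a _ b h, take_mid_le a _ b h]
  · have h2 : a.length + 2 ≤ k := by omega
    rw [take_mid_ge a u v b h2, take_mid_ge a v u b h2]
    simp [List.count_append, List.count_cons]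
    cases u <;> cases v <;> cases c <;> simp

lemma getD_swap (a b : List Bool) (u v : Bool) {i : ℕ} (h1 : i ≠ a.length)
    (h2 : i ≠ a.length + 1) :
    (a ++ [u,v] ++ b).getD i true = (a ++ [v,u] ++ b).getD i true := by
  rcases lt_or_ge i a.length with h | h
  · rw [List.append_assoc, List.append_assoc, List.getD_append _ _ _ _ h,
      List.getD_append _ _ _ _ h]
  · have h3 : a.length + 2 ≤ i := by omega
    rw [List.append_assoc, List.append_assoc, List.getD_append_right _ _ _ _ h,
      List.getD_append_right _ _ _ _ h]
    have : i - a.length = (i - a.length - 2) + 2 := by omega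
    rw [this]
    rfl

lemma count_take_succ (p : List Bool) {s : ℕ} (hs : s < p.length) (c : Bool) :
    (p.take (s+1)).count c = (p.take s).count c + if p[s] = c then 1 else 0 := by
  rw [List.take_succ, List.getElem?_eq_getElem hs]
  rw [List.count_append]
  simp [List.count_singleton']

lemma count_take_mono (p : List Bool) (c : Bool) {k k' : ℕ} (h : k ≤ k') :
    (p.take k).count c ≤ (p.take k').count c := by
  have h1 : p.take k = (p.take k').take k := by rw [List.take_take, min_eq_left h]
  rw [h1]
  exact ((p.take k').take_sublist k).count_le c

lemma getD_lt_length {p : List Bool} {i : ℕ} (h : p.getD i true = false) : i < p.length := by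
  by_contra hc
  rw [List.getD_eq_default _ _ (le_of_not_gt hc)] at h
  exact absurd h (by simp)

lemma witness_unique {p : List Bool} {i j : ℕ} (hi : p.getD i true = false)
    (hj : p.getD j true = false)
    (hc : (p.take i).count false = (p.take j).count false) : i = j := by
  have key : ∀ x y : ℕ, p.getD x true = false → p.getD y true = false →
      (p.take x).count false = (p.take y).count false → x < y → False := by
    intro x y hx hy hxy hlt
    have hxl := getD_lt_length hx
    have h1 : (p.take (x+1)).count false = (p.take x).count false + 1 := by
      rw [count_take_succ p hxl false]
      rw [List.getD_eq_getElem _ _ hxl] at hx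
      simp [hx]
    have h2 : (p.take (x+1)).count false ≤ (p.take y).count false :=
      count_take_mono p false (by omega)
    omega
  rcases lt_trichotomy i j with h | h | h
  · exact absurd (key i j hi hj hc h) (by simp)
  · exact h
  · exact absurd (key j i hj hi hc.symm h) (by simp)

lemma getD_at_mid1 (a : List Bool) (u v : Bool) (b : List Bool) :
    (a ++ [u,v] ++ b).getD a.length true = u := by
  rw [List.append_assoc, List.getD_append_right _ _ _ _ le_rfl]
  simp

lemma getD_at_mid2 (a : List Bool) (u v : Bool) (b : List Bool) :
    (a ++ [u,v] ++ b).getD (a.length + 1) true = v := by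
  rw [List.append_assoc, List.getD_append_right _ _ _ _ (by omega)]
  have : a.length + 1 - a.length = 1 := by omega
  rw [this]
  rfl


lemma count_tf (l : List Bool) : l.count true + l.count false = l.length := by
  induction l with
  | nil => simp
  | cons x xs ih => cases x <;> simp [List.count_cons] <;> omega

lemma dyck_count_false {m n : ℕ} {p : List Bool} (hp : IsDyckPath m n p) :
    p.count false = m := by
  have := count_tf p
  rw [hp.2.1, hp.1] at this
  omega

lemma area_swap (m n : ℕ) (a b : List Bool)
    (hp : IsDyckPath m n (a ++ [true,false] ++ b))
    (hq : IsDyckPath m n (a ++ [false,true] ++ b)) :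
    areaL m n (a ++ [true,false] ++ b) = areaL m n (a ++ [false,true] ++ b) + 1 := by
  set p := a ++ [true,false] ++ b with hpdef
  set q := a ++ [false,true] ++ b with hqdef
  set c1 := a.count false with hc1
  set h0 := a.count true with hh0
  have hlenp : p.length = m + n := hp.1
  have hlena : a.length + 2 ≤ m + n := by
    rw [← hlenp, hpdef]; simp
  -- take computations
  have hpt : p.take (a.length + 1) = a ++ [true] := take_mid_eq a true false b
  have hqt : q.take (a.length + 1) = a ++ [false] := take_mid_eq a false true b
  have hqa : q.take a.length = a := by
    rw [hqdef, take_mid_le a _ b le_rfl, List.take_length]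
  have hpa : p.take a.length = a := by
    rw [hpdef, take_mid_le a _ b le_rfl, List.take_length]
  have hptf : (p.take (a.length + 1)).count false = c1 := by rw [hpt]; simp [hc1]
  have hptt : (p.take (a.length + 1)).count true = h0 + 1 := by rw [hpt]; simp [hh0]
  have hqtf : (q.take (a.length + 1)).count false = c1 + 1 := by rw [hqt]; simp [hc1]
  have hqtt : (q.take (a.length + 1)).count true = h0 := by rw [hqt]; simp [hh0]
  have hgp1 : p.getD a.length true = true := getD_at_mid1 a true false b
  have hgp2 : p.getD (a.length + 1) true = false := getD_at_mid2 a true false b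
  have hgq1 : q.getD a.length true = false := getD_at_mid1 a false true b
  have hgq2 : q.getD (a.length + 1) true = true := getD_at_mid2 a false true b
  -- ranges
  have hc1m : c1 < m := by
    have := dyck_count_false hp
    rw [hpdef] at this
    simp [List.count_append] at this
    omega
  have hh0n : h0 < n := by
    have := hp.2.1
    rw [hpdef] at this
    simp [List.count_append] at this
    omega
  have hdiag0 : n * (c1 + 1) ≤ m * h0 := by
    have := hq.2.2 (a.length + 1)
    rwa [hqtf, hqtt] at this
  -- witness uniqueness
  have witp : ∀ i, p.getD i true = false → (p.take i).count false = c1 →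
      i = a.length + 1 := by
    intro i hi hic
    exact witness_unique hi hgp2 (by rw [hic, hptf])
  have witq : ∀ i, q.getD i true = false → (q.take i).count false = c1 →
      i = a.length := by
    intro i hi hic
    refine witness_unique hi hgq1 ?_
    rw [hic, hqa]
  -- set equality
  have hset : ((Finset.range m ×ˢ Finset.range n).filter (fun c =>
      (∃ i < m + n, p.getD i true = false ∧ (p.take i).count false = c.1 ∧
          c.2 + 1 ≤ (p.take i).count true) ∧ n * (c.1 + 1) ≤ m * c.2)) =
      insert (c1, h0) ((Finset.range m ×ˢ Finset.range n).filter (fun c =>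
      (∃ i < m + n, q.getD i true = false ∧ (q.take i).count false = c.1 ∧
          c.2 + 1 ≤ (q.take i).count true) ∧ n * (c.1 + 1) ≤ m * c.2)) := by
    ext ⟨x, y⟩
    simp only [Finset.mem_insert, Finset.mem_filter, Finset.mem_product,
      Finset.mem_range, Prod.mk.injEq]
    constructor
    · rintro ⟨⟨hxm, hyn⟩, ⟨i, him, hif, hic, hit⟩, hdiag⟩
      by_cases hx : x = c1
      · subst hx
        have hi := witp i hif hic
        subst hi
        rw [hptt] at hit
        by_cases hy : y = h0
        · exact Or.inl ⟨rfl, hy⟩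
        · refine Or.inr ⟨⟨hxm, hyn⟩, ⟨a.length, by omega, hgq1, by rw [hqa], ?_⟩, hdiag⟩
          rw [hqa]
          omega
      · have hi1 : i ≠ a.length := by
          intro hh; rw [hh, hgp1] at hif; exact absurd hif (by simp)
        have hi2 : i ≠ a.length + 1 := by
          intro hh; rw [hh, hptf] at hic; exact hx hic.symm
        refine Or.inr ⟨⟨hxm, hyn⟩, ⟨i, him, ?_, ?_, ?_⟩, hdiag⟩
        · rw [hqdef, ← getD_swap a b true false hi1 hi2]; exact hif
        · rw [hqdef, ← count_take_swap a b true false false hi2]; exact hic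
        · rw [hqdef, ← count_take_swap a b true false true hi2]; exact hit
    · rintro (⟨hx, hy⟩ | ⟨⟨hxm, hyn⟩, ⟨i, him, hif, hic, hit⟩, hdiag⟩)
      · subst hx; subst hy
        refine ⟨⟨hc1m, hh0n⟩, ⟨a.length + 1, by omega, hgp2, hptf, by rw [hptt]⟩, hdiag0⟩
      · by_cases hx : x = c1
        · subst hx
          have hi := witq i hif hic
          subst hi
          rw [hqa] at hit
          refine ⟨⟨hxm, hyn⟩, ⟨a.length + 1, by omega, hgp2, hptf, ?_⟩, hdiag⟩
          rw [hptt]; omega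
        · have hi1 : i ≠ a.length := by
            intro hh; rw [hh, hqa] at hic; exact hx hic.symm
          have hi2 : i ≠ a.length + 1 := by
            intro hh; rw [hh, hgq2] at hif; exact absurd hif (by simp)
          refine ⟨⟨hxm, hyn⟩, ⟨i, him, ?_, ?_, ?_⟩, hdiag⟩
          · rw [hpdef, getD_swap a b true false hi1 hi2]; exact hif
          · rw [hpdef, count_take_swap a b true false false hi2]; exact hic
          · rw [hpdef, count_take_swap a b true false true hi2]; exact hit
  have hnotmem : (c1, h0) ∉ ((Finset.range m ×ˢ Finset.range n).filter (fun c =>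
      (∃ i < m + n, q.getD i true = false ∧ (q.take i).count false = c.1 ∧
          c.2 + 1 ≤ (q.take i).count true) ∧ n * (c.1 + 1) ≤ m * c.2)) := by
    intro hmem
    rw [Finset.mem_filter] at hmem
    obtain ⟨-, ⟨i, him, hif, hic, hit⟩, -⟩ := hmem
    have := witq i hif hic
    subst this
    rw [hqa] at hit
    omega
  rw [areaL, areaL, hset, Finset.card_insert_of_notMem hnotmem]

lemma area_pos_witness (m n : ℕ) (p : List Bool) (h : 0 < areaL m n p) :
    ∃ i, p.getD i true = false ∧
      n * ((p.take i).count false + 1) + m ≤ m * ((p.take i).count true) := by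
  rw [areaL, Finset.card_pos] at h
  obtain ⟨⟨x, y⟩, hmem⟩ := h
  rw [Finset.mem_filter] at hmem
  obtain ⟨-, ⟨i, him, hif, hic, hit⟩, hdiag⟩ := hmem
  refine ⟨i, hif, ?_⟩
  rw [hic]
  have hdiag' : n * (x + 1) ≤ m * y := hdiag
  calc n * (x + 1) + m ≤ m * y + m := by omega
    _ = m * (y + 1) := by ring
    _ ≤ m * ((p.take i).count true) := Nat.mul_le_mul_left _ hit

lemma swap_exists (m n : ℕ) (hm : 0 < m) (p : List Bool) (hp : IsDyckPath m n p)
    (h : 0 < areaL m n p) :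
    ∃ a b, p = a ++ [true, false] ++ b ∧ IsDyckPath m n (a ++ [false, true] ++ b) := by
  classical
  have hP : ∃ i, p.getD i true = false ∧
      n * ((p.take i).count false + 1) + m ≤ m * ((p.take i).count true) :=
    area_pos_witness m n p h
  set i := Nat.find hP with hidef
  obtain ⟨hif, hii⟩ := Nat.find_spec hP
  rw [← hidef] at hif hii
  have hi0 : i ≠ 0 := by
    intro h0
    rw [h0] at hii
    simp at hii
    omega
  have hil : i < p.length := getD_lt_length hif
  have hil1 : i - 1 < p.length := by omega
  have hieq : i - 1 + 1 = i := by omega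
  rw [List.getD_eq_getElem _ _ hil] at hif
  -- previous step is North
  have hptrue : p[i-1] = true := by
    by_contra hc
    rw [Bool.not_eq_true] at hc
    have hcnt := count_take_succ p hil1
    rw [hieq] at hcnt
    have hf : (p.take i).count false = (p.take (i-1)).count false + 1 := by
      rw [hcnt false]; simp [hc]
    have ht : (p.take i).count true = (p.take (i-1)).count true := by
      rw [hcnt true]; simp [hc]
    have hmin := Nat.find_min hP (show i - 1 < i by omega)
    apply hmin
    refine ⟨by rw [List.getD_eq_getElem _ _ hil1, hc], ?_⟩
    have e1 : n * ((p.take (i-1)).count false + 1) ≤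
        n * ((p.take (i-1)).count false + 1 + 1) := Nat.mul_le_mul_left _ (by omega)
    rw [hf, ht] at hii
    omega
  have hsplit : p = p.take (i-1) ++ [true, false] ++ p.drop (i+1) := by
    conv_lhs => rw [← List.take_append_drop (i-1) p]
    rw [List.drop_eq_getElem_cons hil1, hieq, List.drop_eq_getElem_cons hil,
      hptrue, hif]
    simp
  set a := p.take (i-1) with hadef
  set b := p.drop (i+1) with hbdef
  have hla : a.length = i - 1 := by
    rw [hadef, List.length_take]; omega
  have hla1 : a.length + 1 = i := by omega
  have hcnt := count_take_succ p hil1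
  rw [hieq] at hcnt
  have hfi : (p.take i).count false = a.count false := by
    rw [hcnt false]; simp [hptrue, hadef]
  have hti : (p.take i).count true = a.count true + 1 := by
    rw [hcnt true]; simp [hptrue, hadef]
  refine ⟨a, b, hsplit, ?_, ?_, ?_⟩
  · have : (a ++ [false, true] ++ b).length = p.length := by
      rw [hsplit]; simp
    rw [this, hp.1]
  · have : (a ++ [false, true] ++ b).count true = p.count true := by
      rw [hsplit]; simp [List.count_append]
    rw [this, hp.2.1]
  · intro k
    by_cases hk : k = i
    · subst hk
      rw [← hla1, take_mid_eq a false true b]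
      simp only [List.count_append]
      have e1 : m * (a.count true + 1) = m * a.count true + m := by ring
      rw [hfi, hti] at hii
      simp only [List.count_cons, List.count_nil]
      simp
      omega
    · have hk' : k ≠ a.length + 1 := by omega
      rw [count_take_swap a b false true false hk', count_take_swap a b false true true hk',
        ← hsplit]
      exact hp.2.2 k

lemma exists_next_false (p : List Bool) : ∀ d k, p.length ≤ k + d → k < p.length →
    (p.take k).count false < p.count false →
    ∃ j, k ≤ j ∧ j < p.length ∧ p.getD j true = false ∧
      (p.take j).count false = (p.take k).count false := by
  intro d
  induction d with
  | zero => intro k h1 h2 _; omega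
  | succ d ih =>
    intro k h1 h2 h3
    by_cases hc : p[k] = false
    · exact ⟨k, le_rfl, h2, by rw [List.getD_eq_getElem _ _ h2]; exact hc, rfl⟩
    · rw [Bool.not_eq_false] at hc
      have hcnt := count_take_succ p h2 false
      have hceq : (p.take (k+1)).count false = (p.take k).count false := by
        rw [hcnt]; simp [hc]
      have hk1 : k + 1 < p.length := by
        rcases Nat.lt_or_ge (k+1) p.length with h | h
        · exact h
        · exfalso
          rw [List.take_of_length_le h] at hceq
          omega
      obtain ⟨j, hj1, hj2, hj3, hj4⟩ := ih (k+1) (by omega) hk1 (by omega)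
      exact ⟨j, by omega, hj2, hj3, by rw [hj4, hceq]⟩

lemma area_zero_step (m n : ℕ) (p : List Bool) (hp : IsDyckPath m n p)
    (h0 : areaL m n p = 0) {k : ℕ} (hk : k < m + n) :
    p[k]'(by rw [hp.1]; exact hk) = false ↔
      ((p.take k).count false < m ∧
        n * ((p.take k).count false + 1) ≤ m * ((p.take k).count true)) := by
  have hkl : k < p.length := by rw [hp.1]; exact hk
  have hcnt := count_take_succ p hkl
  constructor
  · intro hfalse
    have hf : (p.take (k+1)).count false = (p.take k).count false + 1 := by
      rw [hcnt false]; simp [hfalse]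
    have ht : (p.take (k+1)).count true = (p.take k).count true := by
      rw [hcnt true]; simp [hfalse]
    constructor
    · have h1 : (p.take (k+1)).count false ≤ p.count false :=
        ((p.take_sublist (k+1)).count_le false)
      rw [dyck_count_false hp] at h1
      omega
    · have := hp.2.2 (k+1)
      rwa [hf, ht] at this
  · intro ⟨hfm, hdyck⟩
    by_contra hc
    rw [Bool.not_eq_false] at hc
    -- find the next East step
    have hfm' : (p.take k).count false < p.count false := by
      rw [dyck_count_false hp]; exact hfm
    obtain ⟨j, hj1, hj2, hj3, hj4⟩ :=
      exists_next_false p p.length k (by omega) hkl hfm'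
    have hjk : k + 1 ≤ j := by
      rcases Nat.eq_or_lt_of_le hj1 with h | h
      · exfalso
        rw [← h, List.getD_eq_getElem _ _ hkl, hc] at hj3
        exact absurd hj3 (by simp)
      · omega
    have ht1 : (p.take k).count true + 1 ≤ (p.take j).count true := by
      have : (p.take (k+1)).count true = (p.take k).count true + 1 := by
        rw [hcnt true]; simp [hc]
      have h2 := count_take_mono p true hjk
      omega
    have htn : (p.take j).count true ≤ n := by
      have h1 : (p.take j).count true ≤ p.count true :=
        ((p.take_sublist j).count_le true)
      rw [hp.2.1] at h1; exact h1
    -- build a cell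
    have hmem : ((p.take k).count false, (p.take j).count true - 1) ∈
        ((Finset.range m ×ˢ Finset.range n).filter (fun c =>
          (∃ i < m + n, p.getD i true = false ∧ (p.take i).count false = c.1 ∧
              c.2 + 1 ≤ (p.take i).count true) ∧
          n * (c.1 + 1) ≤ m * c.2)) := by
      rw [Finset.mem_filter, Finset.mem_product, Finset.mem_range, Finset.mem_range]
      refine ⟨⟨hfm, by omega⟩, ⟨j, by rw [← hp.1]; exact hj2, hj3, hj4, by omega⟩, ?_⟩
      calc n * ((p.take k).count false + 1) ≤ m * ((p.take k).count true) := hdyck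
        _ ≤ m * ((p.take j).count true - 1) := Nat.mul_le_mul_left _ (by omega)
    have : 0 < areaL m n p := by
      rw [areaL, Finset.card_pos]
      exact ⟨_, hmem⟩
    omega

lemma area_zero_unique (m n : ℕ) (p q : List Bool) (hp : IsDyckPath m n p)
    (hq : IsDyckPath m n q) (h0p : areaL m n p = 0) (h0q : areaL m n q = 0) :
    p = q := by
  have key : ∀ k, p.take k = q.take k := by
    intro k
    induction k with
    | zero => simp
    | succ k ih =>
      by_cases hk : k < m + n
      · have hkp : k < p.length := by rw [hp.1]; exact hk
        have hkq : k < q.length := by rw [hq.1]; exact hk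
        rw [List.take_succ, List.take_succ, List.getElem?_eq_getElem hkp,
          List.getElem?_eq_getElem hkq, ih]
        have hstep : p[k] = false ↔ (List.count false (List.take k q) < m ∧
            n * (List.count false (List.take k q) + 1) ≤ m * List.count true (List.take k q)) := by
          rw [← ih]; exact area_zero_step m n p hp h0p hk
        have hs2 : q[k] = false ↔ (List.count false (List.take k q) < m ∧
            n * (List.count false (List.take k q) + 1) ≤ m * List.count true (List.take k q)) :=
          area_zero_step m n q hq h0q hk
        have : p[k] = q[k] := by
          cases hpk : p[k] <;> cases hqk : q[k]
          · rfl
          · exact absurd (hs2.mpr (hstep.mp hpk)) (by rw [hqk]; simp)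
          · exact absurd (hstep.mpr (hs2.mp hqk)) (by rw [hpk]; simp)
          · rfl
        rw [this]
      · have h1 : p.length ≤ k := by rw [hp.1]; omega
        have h2 : q.length ≤ k := by rw [hq.1]; omega
        rw [List.take_of_length_le (show p.length ≤ k + 1 by omega),
          List.take_of_length_le (show q.length ≤ k + 1 by omega)]
        rw [List.take_of_length_le h1, List.take_of_length_le h2] at ih
        exact ih
  have := key (m + n)
  rwa [List.take_of_length_le (by rw [hp.1]), List.take_of_length_le (by rw [hq.1])] at this

/-- For coprime positive `m, n`: every `(m,n)`-Dyck path of positive area contains a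
consecutive North-then-East pair whose swap to East-then-North yields another
`(m,n)`-Dyck path; consequently every `(m,n)`-Dyck path is obtained from the area-0
path by a sequence of East-North to North-East swaps. -/
theorem sweep_stmt17 (m n : ℕ) (hm : 0 < m) (hn : 0 < n) (h : Nat.Coprime m n)
    (p : List Bool) (hp : IsDyckPath m n p) :
    (0 < areaL m n p →
      ∃ a b, p = a ++ [true, false] ++ b ∧ IsDyckPath m n (a ++ [false, true] ++ b)) ∧
    (∀ p₀, IsDyckPath m n p₀ → areaL m n p₀ = 0 →
      Relation.ReflTransGen (SwapRel m n) p₀ p) := by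
  constructor
  · exact fun hpos => swap_exists m n hm p hp hpos
  · intro p₀ hp₀ h0
    have main : ∀ N pp, IsDyckPath m n pp → areaL m n pp ≤ N →
        Relation.ReflTransGen (SwapRel m n) p₀ pp := by
      intro N
      induction N with
      | zero =>
        intro pp hpp ha
        have hz : areaL m n pp = 0 := by omega
        rw [area_zero_unique m n p₀ pp hp₀ hpp h0 hz]
      | succ N ih =>
        intro pp hpp ha
        by_cases hz : areaL m n pp = 0
        · rw [area_zero_unique m n p₀ pp hp₀ hpp h0 hz]
        · obtain ⟨a, b, heq, hq⟩ := swap_exists m n hm pp hpp (Nat.pos_of_ne_zero hz)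
          have hpp' : IsDyckPath m n (a ++ [true, false] ++ b) := heq ▸ hpp
          have harea := area_swap m n a b hpp' hq
          have hq_area : areaL m n (a ++ [false, true] ++ b) ≤ N := by
            rw [heq] at ha; omega
          have step : SwapRel m n (a ++ [false, true] ++ b) pp :=
            ⟨a, b, rfl, heq, hq, hpp⟩
          exact (ih _ hq hq_area).tail step
    exact main (areaL m n p) p hp le_rfl
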